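/- Let n ≥ 1, let σ be a permutation of Fin n, and let a = σ⁻¹ 0 be the position of the minimum value. Then σ is 213-avoiding if and only if the following three conditions hold: (1) for all indices i < a and k > a, σ k < σ i; (2) there do not exist indices i < j < k all strictly less than a with σ j < σ i < σ k; (3) there do not exist indices i < j < k all strictly greater than a with σ j < σ i < σ k. -/
import Mathlib


/-- A permutation `σ` of `Fin n` is 213-avoiding if there are no indices
`i < j < k` with `σ j < σ i < σ k`. -/
def Avoids213 {n : ℕ} (σ : Equiv.Perm (Fin n)) : Prop :=
  ¬ ∃ i j k : Fin n, i < j ∧ j < k ∧ σ j < σ i ∧ σ i < σ k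

/-- A permutation of `Fin n` (with `n ≥ 1`) is 213-avoiding iff (1) every entry before
the position `a` of the minimum is greater than every entry after `a`, (2) there is no
213-pattern strictly before `a`, and (3) there is no 213-pattern strictly after `a`. -/
theorem avoids213_iff_split_at_min (n : ℕ) (hn : 1 ≤ n) (σ : Equiv.Perm (Fin n)) :
    Avoids213 σ ↔
      ((∀ i k : Fin n, i < σ.symm ⟨0, hn⟩ → σ.symm ⟨0, hn⟩ < k → σ k < σ i) ∧
       (¬ ∃ i j k : Fin n, i < j ∧ j < k ∧ k < σ.symm ⟨0, hn⟩ ∧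
          σ j < σ i ∧ σ i < σ k) ∧
       (¬ ∃ i j k : Fin n, σ.symm ⟨0, hn⟩ < i ∧ i < j ∧ j < k ∧
          σ j < σ i ∧ σ i < σ k)) := by
  set a := σ.symm ⟨0, hn⟩ with ha
  have hσa : σ a = ⟨0, hn⟩ := σ.apply_symm_apply _
  have hmin : ∀ x : Fin n, x ≠ a → σ a < σ x := by
    intro x hx
    rw [hσa]
    refine Fin.lt_def.mpr (Nat.pos_of_ne_zero fun h0 => hx (σ.injective ?_))
    rw [hσa]; exact Fin.ext h0
  constructor
  · intro h
    refine ⟨?_, ?_, ?_⟩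
    · intro i k hi hk
      by_contra hc
      push_neg at hc
      have hik : i ≠ k := ne_of_lt (hi.trans hk)
      have h2 : σ i < σ k := lt_of_le_of_ne hc (fun e => hik (σ.injective e))
      exact h ⟨i, a, k, hi, hk, hmin i (ne_of_lt hi), h2⟩
    · rintro ⟨i, j, k, hij, hjk, _, hji, hik⟩
      exact h ⟨i, j, k, hij, hjk, hji, hik⟩
    · rintro ⟨i, j, k, _, hij, hjk, hji, hik⟩
      exact h ⟨i, j, k, hij, hjk, hji, hik⟩
  · rintro ⟨h1, h2, h3⟩ ⟨i, j, k, hij, hjk, hji, hik⟩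
    rcases lt_trichotomy k a with hk | hk | hk
    · exact h2 ⟨i, j, k, hij, hjk, hk, hji, hik⟩
    · subst hk
      exact absurd hik (not_lt_of_gt (hmin i (ne_of_lt (hij.trans hjk))))
    · rcases lt_trichotomy i a with hi | hi | hi
      · exact absurd hik (not_lt_of_gt (h1 i k hi hk))
      · subst hi
        exact absurd hji (not_lt_of_gt (hmin j (ne_of_gt hij)))
      · exact h3 ⟨i, j, k, hi, hij, hjk, hji, hik⟩
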